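/- The function S : ℝ → ℝ defined by S(x) := I₀(2x)³ + 2·∑_{n=1}^∞ I_n(2x)³ (equal to ∑_{n∈ℤ} I_n(2x)³ since I_{−n} = I_n) is three times differentiable and is annihilated by the third-order differential operator A_x = x²D³ − (x²−3x)D² − (24x²+2x−1)D − (36x²+24x); i.e., for all x ∈ ℝ: x²·S'''(x) − (x²−3x)·S''(x) − (24x²+2x−1)·S'(x) − (36x²+24x)·S(x) = 0. -/

import Mathlib

set_option maxHeartbeats 1000000
open Real

/-- The modified Bessel function of the first kind of (natural) order `n`,
`I_n(x) = ∑_{k=0}^∞ (x/2)^{2k+n} / (k!·(k+n)!)`. -/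
noncomputable def besselI (n : ℕ) (x : ℝ) : ℝ :=
  ∑' k : ℕ, (x / 2) ^ (2 * k + n) / ((Nat.factorial k : ℝ) * (Nat.factorial (k + n) : ℝ))

/-- `S(x) = ∑_{n∈ℤ} I_n(2x)³ = I₀(2x)³ + 2∑_{n≥1} I_n(2x)³` (using `I_{-n} = I_n`). -/
noncomputable def S (x : ℝ) : ℝ :=
  besselI 0 (2 * x) ^ 3 + 2 * ∑' n : ℕ, besselI (n + 1) (2 * x) ^ 3

namespace BesselAux

noncomputable def G (m : ℕ) (x : ℝ) : ℝ :=
  ∑' k : ℕ, x ^ (2 * k + m) / ((Nat.factorial k : ℝ) * (Nat.factorial (k + m) : ℝ))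

lemma summable_of_le_expser {f : ℕ → ℝ} (C r : ℝ)
    (h : ∀ k, |f k| ≤ C * r ^ k / (Nat.factorial k : ℝ)) : Summable f := by
  have hg : Summable fun k : ℕ => C * r ^ k / (Nat.factorial k : ℝ) := by
    simpa [mul_div_assoc] using (Real.summable_pow_div_factorial r).mul_left C
  exact Summable.of_norm_bounded hg (by simpa using h)

lemma summable_mul_pow_div_factorial (r : ℝ) :
    Summable (fun k : ℕ => (k : ℝ) * r ^ k / (Nat.factorial k : ℝ)) := by
  apply (summable_nat_add_iff 1).mp
  have : (fun k : ℕ => ((k + 1 : ℕ) : ℝ) * r ^ (k + 1) / (Nat.factorial (k + 1) : ℝ))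
      = fun k : ℕ => r * (r ^ k / (Nat.factorial k : ℝ)) := by
    funext k
    have hk : (Nat.factorial (k + 1) : ℝ) = (k + 1 : ℝ) * (Nat.factorial k : ℝ) := by
      rw [Nat.factorial_succ]; push_cast; ring
    rw [hk]
    have h1 : ((k:ℝ) + 1) ≠ 0 := by positivity
    have h2 : (Nat.factorial k : ℝ) ≠ 0 := by positivity
    field_simp
    push_cast; ring
  rw [this]
  exact (Real.summable_pow_div_factorial r).mul_left r

lemma fact_ne (k : ℕ) : (Nat.factorial k : ℝ) ≠ 0 := by positivity

lemma summable_G_terms (m : ℕ) (x : ℝ) :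
    Summable fun k : ℕ => x ^ (2 * k + m) / ((Nat.factorial k : ℝ) * (Nat.factorial (k + m) : ℝ)) := by
  apply summable_of_le_expser (|x| ^ m) (x ^ 2)
  intro k
  have h1 : |x ^ (2 * k + m) / ((Nat.factorial k : ℝ) * (Nat.factorial (k + m) : ℝ))|
      = |x| ^ (2 * k + m) / ((Nat.factorial k : ℝ) * (Nat.factorial (k + m) : ℝ)) := by
    rw [abs_div, abs_pow]
    congr 1
    rw [abs_of_pos]; positivity
  rw [h1]
  have h2 : |x| ^ (2 * k + m) = |x| ^ m * (x ^ 2) ^ k := by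
    rw [show (x ^ 2) ^ k = |x| ^ (2 * k) by rw [← sq_abs, ← pow_mul], pow_add]
    ring
  rw [h2, mul_div_assoc]
  have hfk : (0:ℝ) < (Nat.factorial k : ℝ) := by positivity
  have hfm : (1:ℝ) ≤ (Nat.factorial (k+m) : ℝ) :=
    Nat.one_le_cast.mpr (Nat.one_le_iff_ne_zero.mpr (Nat.factorial_ne_zero (k+m)))
  have hden : (Nat.factorial k : ℝ) ≤ (Nat.factorial k : ℝ) * (Nat.factorial (k+m) : ℝ) := by
    nlinarith
  have := div_le_div_of_nonneg_left (by positivity : (0:ℝ) ≤ (x^2)^k) hfk hden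
  have hxm : (0:ℝ) ≤ |x| ^ m := by positivity
  rw [mul_div_assoc]
  exact mul_le_mul_of_nonneg_left this hxm

lemma besselI_eq_G (m : ℕ) (x : ℝ) : besselI m (2 * x) = G m x := by
  unfold besselI G
  apply tsum_congr
  intro k
  norm_num

lemma exp_tsum (y : ℝ) : Real.exp y = ∑' n : ℕ, y ^ n / (Nat.factorial n : ℝ) := by
  rw [Real.exp_eq_exp_ℝ, NormedSpace.exp_eq_tsum_div]

lemma pow_div_factorial_le_exp {y : ℝ} (hy : 0 ≤ y) (m : ℕ) :
    y ^ m / (Nat.factorial m : ℝ) ≤ Real.exp y := by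
  rw [exp_tsum]
  exact Summable.le_tsum (Real.summable_pow_div_factorial y) m (fun k _ => by positivity)

lemma abs_term_le (m k : ℕ) (x : ℝ) :
    |x ^ (2 * k + m) / ((Nat.factorial k : ℝ) * (Nat.factorial (k + m) : ℝ))| ≤
      (|x| ^ m / (Nat.factorial m : ℝ)) * ((x ^ 2) ^ k / (Nat.factorial k : ℝ)) := by
  have h1 : |x ^ (2 * k + m) / ((Nat.factorial k : ℝ) * (Nat.factorial (k + m) : ℝ))|
      = |x| ^ (2 * k + m) / ((Nat.factorial k : ℝ) * (Nat.factorial (k + m) : ℝ)) := by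
    rw [abs_div, abs_pow]
    congr 1
    rw [abs_of_pos]; positivity
  have h2 : |x| ^ (2 * k + m) = |x| ^ m * (x ^ 2) ^ k := by
    rw [show (x ^ 2) ^ k = |x| ^ (2 * k) by rw [← sq_abs, ← pow_mul], pow_add]
    ring
  rw [h1, h2]
  have hle : (Nat.factorial m : ℝ) * (Nat.factorial k : ℝ) ≤
      (Nat.factorial k : ℝ) * (Nat.factorial (k + m) : ℝ) := by
    rw [mul_comm]
    gcongr
    exact Nat.le_add_left m k
  have := div_le_div_of_nonneg_left
    (by positivity : (0:ℝ) ≤ |x| ^ m * (x ^ 2) ^ k)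
    (by positivity : (0:ℝ) < (Nat.factorial m : ℝ) * (Nat.factorial k : ℝ)) hle
  calc |x| ^ m * (x ^ 2) ^ k / ((Nat.factorial k : ℝ) * (Nat.factorial (k + m) : ℝ))
      ≤ |x| ^ m * (x ^ 2) ^ k / ((Nat.factorial m : ℝ) * (Nat.factorial k : ℝ)) := this
    _ = (|x| ^ m / (Nat.factorial m : ℝ)) * ((x ^ 2) ^ k / (Nat.factorial k : ℝ)) := by
        rw [div_mul_div_comm]

lemma G_abs_le (m : ℕ) (x : ℝ) :
    |G m x| ≤ |x| ^ m / (Nat.factorial m : ℝ) * Real.exp (x ^ 2) := by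
  have hs := (summable_G_terms m x).abs
  have hb : Summable fun k : ℕ =>
      (|x| ^ m / (Nat.factorial m : ℝ)) * ((x ^ 2) ^ k / (Nat.factorial k : ℝ)) :=
    (Real.summable_pow_div_factorial (x ^ 2)).mul_left _
  have hs' : Summable fun k : ℕ =>
      ‖x ^ (2 * k + m) / ((Nat.factorial k : ℝ) * (Nat.factorial (k + m) : ℝ))‖ := by
    simpa only [Real.norm_eq_abs] using hs
  have h0 := norm_tsum_le_tsum_norm hs'
  simp only [Real.norm_eq_abs] at h0
  calc |G m x| ≤ ∑' k : ℕ, |x ^ (2 * k + m) / ((Nat.factorial k : ℝ) * (Nat.factorial (k + m) : ℝ))| := by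
        rw [G]; exact h0
    _ ≤ ∑' k : ℕ, (|x| ^ m / (Nat.factorial m : ℝ)) * ((x ^ 2) ^ k / (Nat.factorial k : ℝ)) :=
        Summable.tsum_le_tsum (fun k => abs_term_le m k x) hs hb
    _ = |x| ^ m / (Nat.factorial m : ℝ) * Real.exp (x ^ 2) := by
        rw [tsum_mul_left, ← exp_tsum]

lemma G_bd (m : ℕ) {R y : ℝ} (hy : |y| ≤ R) :
    |G m y| ≤ Real.exp (R ^ 2 + 2 * R) * (1 / 2) ^ m := by
  have hR : 0 ≤ R := le_trans (abs_nonneg y) hy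
  have h1 : |G m y| ≤ |y| ^ m / (Nat.factorial m : ℝ) * Real.exp (y ^ 2) := G_abs_le m y
  have h2 : |y| ^ m / (Nat.factorial m : ℝ) ≤ R ^ m / (Nat.factorial m : ℝ) := by
    gcongr
  have h3 : Real.exp (y ^ 2) ≤ Real.exp (R ^ 2) := by
    apply Real.exp_le_exp.mpr
    calc y ^ 2 = |y| ^ 2 := (sq_abs y).symm
      _ ≤ R ^ 2 := by gcongr
  have h4 : R ^ m / (Nat.factorial m : ℝ) = (2 * R) ^ m / (Nat.factorial m : ℝ) * (1 / 2) ^ m := by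
    rw [mul_pow]
    field_simp
    rw [mul_assoc, ← mul_pow]; norm_num
  have h5 : (2 * R) ^ m / (Nat.factorial m : ℝ) ≤ Real.exp (2 * R) :=
    pow_div_factorial_le_exp (by linarith) m
  calc |G m y| ≤ R ^ m / (Nat.factorial m : ℝ) * Real.exp (y ^ 2) := by
        refine le_trans h1 (mul_le_mul_of_nonneg_right h2 (Real.exp_pos _).le)
    _ ≤ (2 * R) ^ m / (Nat.factorial m : ℝ) * (1 / 2) ^ m * Real.exp (R ^ 2) := by
        rw [← h4]
        exact mul_le_mul_of_nonneg_left h3 (by positivity)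
    _ ≤ Real.exp (2 * R) * (1 / 2) ^ m * Real.exp (R ^ 2) := by
        apply mul_le_mul_of_nonneg_right _ (Real.exp_pos _).le
        exact mul_le_mul_of_nonneg_right h5 (by positivity)
    _ = Real.exp (R ^ 2 + 2 * R) * (1 / 2) ^ m := by
        rw [Real.exp_add]; ring


/-! ### Termwise differentiation -/

lemma hasDerivAt_tsum_loc {ι : Type*} (f f' : ι → ℝ → ℝ)
    (hf : ∀ i (y : ℝ), HasDerivAt (f i) (f' i y) y)
    (hsum : ∀ y : ℝ, Summable fun i => f i y)
    (hbd : ∀ R : ℝ, 1 ≤ R → ∃ u : ι → ℝ, Summable u ∧ ∀ i (y : ℝ), |y| ≤ R → |f' i y| ≤ u i)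
    (x : ℝ) : HasDerivAt (fun y => ∑' i, f i y) (∑' i, f' i x) x := by
  obtain ⟨u, hu, hub⟩ := hbd (|x| + 1) (by linarith [abs_nonneg x])
  have hx : x ∈ Metric.ball (0 : ℝ) (|x| + 1) := by
    simp [Metric.mem_ball, Real.dist_eq]
  exact hasDerivAt_tsum_of_isPreconnected hu Metric.isOpen_ball
    (convex_ball (0:ℝ) (|x| + 1)).isPreconnected
    (fun i y _ => hf i y)
    (fun i y hy => by
      rw [Real.norm_eq_abs]
      exact hub i y (le_of_lt (by simpa [Metric.mem_ball, Real.dist_eq] using hy)))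
    hx (hsum x) hx

lemma fact_cast_succ (j : ℕ) :
    ((Nat.factorial (j + 1) : ℝ)) = ((j : ℝ) + 1) * (Nat.factorial j : ℝ) := by
  rw [Nat.factorial_succ]; push_cast; ring

lemma summable_deriv_bound (m : ℕ) {R : ℝ} (hR : 1 ≤ R) :
    Summable fun k : ℕ =>
      ((2 * k + m : ℕ) : ℝ) * R ^ (2 * k + m - 1) / ((Nat.factorial k : ℝ) * (Nat.factorial (k + m) : ℝ)) := by
  have hR0 : 0 ≤ R := by linarith
  apply Summable.of_nonneg_of_le (f := fun k : ℕ =>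
      2 * R ^ m * ((k : ℝ) * (R ^ 2) ^ k / (Nat.factorial k : ℝ)) +
      (m : ℝ) * R ^ m * ((R ^ 2) ^ k / (Nat.factorial k : ℝ)))
  · intro k; positivity
  · intro k
    have h1 : R ^ (2 * k + m - 1) ≤ R ^ m * (R ^ 2) ^ k := by
      rw [← pow_mul, ← pow_add]
      exact pow_le_pow_right₀ hR (by omega)
    have h2 : (1 : ℝ) ≤ (Nat.factorial (k + m) : ℝ) :=
      Nat.one_le_cast.mpr (Nat.one_le_iff_ne_zero.mpr (Nat.factorial_ne_zero _))
    have h3 : ((2 * k + m : ℕ) : ℝ) * R ^ (2 * k + m - 1) / ((Nat.factorial k : ℝ) * (Nat.factorial (k + m) : ℝ))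
        ≤ ((2 * k + m : ℕ) : ℝ) * (R ^ m * (R ^ 2) ^ k) / (Nat.factorial k : ℝ) := by
      have hk : (0:ℝ) < (Nat.factorial k : ℝ) := by positivity
      rw [div_le_div_iff₀ (by positivity) hk]
      have hnum : ((2 * k + m : ℕ) : ℝ) * R ^ (2 * k + m - 1) ≤ ((2 * k + m : ℕ) : ℝ) * (R ^ m * (R ^ 2) ^ k) :=
        mul_le_mul_of_nonneg_left h1 (by positivity)
      calc ((2 * k + m : ℕ) : ℝ) * R ^ (2 * k + m - 1) * (Nat.factorial k : ℝ)
          ≤ ((2 * k + m : ℕ) : ℝ) * (R ^ m * (R ^ 2) ^ k) * (Nat.factorial k : ℝ) :=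
            mul_le_mul_of_nonneg_right hnum hk.le
        _ ≤ ((2 * k + m : ℕ) : ℝ) * (R ^ m * (R ^ 2) ^ k) * ((Nat.factorial k : ℝ) * (Nat.factorial (k + m) : ℝ)) := by
            rw [← mul_assoc]
            apply mul_le_mul_of_nonneg_left _ (by positivity)
            nlinarith [(Nat.cast_pos (α := ℝ)).mpr (Nat.factorial_pos k)]
    refine le_trans h3 (le_of_eq ?_)
    push_cast
    field_simp
  · exact ((summable_mul_pow_div_factorial (R ^ 2)).mul_left (2 * R ^ m)).add
      ((Real.summable_pow_div_factorial (R ^ 2)).mul_left ((m : ℝ) * R ^ m))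

lemma hasDerivAt_G_raw (m : ℕ) (x : ℝ) :
    HasDerivAt (G m)
      (∑' k : ℕ, ((2 * k + m : ℕ) : ℝ) * x ^ (2 * k + m - 1) / ((Nat.factorial k : ℝ) * (Nat.factorial (k + m) : ℝ))) x := by
  unfold G
  apply hasDerivAt_tsum_loc
    (f := fun k y => y ^ (2 * k + m) / ((Nat.factorial k : ℝ) * (Nat.factorial (k + m) : ℝ)))
    (f' := fun k y => ((2 * k + m : ℕ) : ℝ) * y ^ (2 * k + m - 1) / ((Nat.factorial k : ℝ) * (Nat.factorial (k + m) : ℝ)))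
  · intro k y
    simpa using (hasDerivAt_pow (2 * k + m) y).div_const
      ((Nat.factorial k : ℝ) * (Nat.factorial (k + m) : ℝ))
  · exact fun y => summable_G_terms m y
  · intro R hR
    refine ⟨_, summable_deriv_bound m hR, fun k y hy => ?_⟩
    have h1 : |((2 * k + m : ℕ) : ℝ) * y ^ (2 * k + m - 1) / ((Nat.factorial k : ℝ) * (Nat.factorial (k + m) : ℝ))|
        = ((2 * k + m : ℕ) : ℝ) * |y| ^ (2 * k + m - 1) / ((Nat.factorial k : ℝ) * (Nat.factorial (k + m) : ℝ)) := by
      rw [abs_div, abs_mul, abs_pow, Nat.abs_cast,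
        abs_of_pos (show (0:ℝ) < (Nat.factorial k : ℝ) * (Nat.factorial (k + m) : ℝ) by positivity)]
    rw [h1]
    gcongr

lemma tsum_shift {g : ℕ → ℝ} (hg : Summable fun k => g (k + 1)) (h0 : g 0 = 0) :
    ∑' k, g k = ∑' k, g (k + 1) := by
  have hs : Summable g := (summable_nat_add_iff 1).mp hg
  rw [Summable.tsum_eq_zero_add hs, h0, zero_add]


lemma hasDerivAt_G_succ (m : ℕ) (x : ℝ) :
    HasDerivAt (G (m + 1)) (G m x + G (m + 2) x) x := by
  have h := hasDerivAt_G_raw (m + 1) x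
  convert h using 1
  set A : ℕ → ℝ := fun k => x ^ (2 * k + m) / ((Nat.factorial k : ℝ) * (Nat.factorial (k + m) : ℝ)) with hA
  set B : ℕ → ℝ := fun k => (k : ℝ) * x ^ (2 * k + m) / ((Nat.factorial k : ℝ) * (Nat.factorial (k + (m + 1)) : ℝ)) with hB
  have hBsucc : ∀ k : ℕ, B (k + 1) = x ^ (2 * k + (m + 2)) / ((Nat.factorial k : ℝ) * (Nat.factorial (k + (m + 2)) : ℝ)) := by
    intro k
    rw [hB]
    simp only
    have e1 : 2 * (k + 1) + m = 2 * k + (m + 2) := by ring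
    have e2 : (k + 1) + (m + 1) = k + (m + 2) := by ring
    rw [e1, e2, fact_cast_succ k]
    have h2 : (Nat.factorial k : ℝ) ≠ 0 := fact_ne k
    have h3 : (Nat.factorial (k + (m + 2)) : ℝ) ≠ 0 := fact_ne _
    have h4 : ((k : ℝ) + 1) ≠ 0 := by positivity
    field_simp
    push_cast; ring
  have hBsum' : Summable fun k => B (k + 1) := by
    apply Summable.congr (summable_G_terms (m + 2) x)
    intro k
    rw [hBsucc k]
  have hB0 : B 0 = 0 := by simp [hB]
  have hterm : ∀ k : ℕ,
      ((2 * k + (m + 1) : ℕ) : ℝ) * x ^ (2 * k + (m + 1) - 1) / ((Nat.factorial k : ℝ) * (Nat.factorial (k + (m + 1)) : ℝ))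
        = A k + B k := by
    intro k
    have e1 : 2 * k + (m + 1) - 1 = 2 * k + m := by omega
    have e2 : k + (m + 1) = (k + m) + 1 := by ring
    rw [e1, hA, hB]
    simp only
    rw [e2, fact_cast_succ (k + m)]
    have h2 : (Nat.factorial k : ℝ) ≠ 0 := fact_ne k
    have h3 : (Nat.factorial (k + m) : ℝ) ≠ 0 := fact_ne _
    have h4 : ((k : ℝ) + (m : ℝ) + 1) ≠ 0 := by positivity
    push_cast
    field_simp
    ring
  rw [tsum_congr hterm, Summable.tsum_add (summable_G_terms m x)
    ((summable_nat_add_iff 1).mp hBsum'), tsum_shift hBsum' hB0, tsum_congr hBsucc]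
  rfl

lemma hasDerivAt_G_zero (x : ℝ) : HasDerivAt (G 0) (2 * G 1 x) x := by
  have h := hasDerivAt_G_raw 0 x
  convert h using 1
  set B : ℕ → ℝ := fun k => (k : ℝ) * x ^ (2 * k + 0 - 1) / ((Nat.factorial k : ℝ) * (Nat.factorial (k + 0) : ℝ)) with hB
  have hterm : ∀ k : ℕ,
      ((2 * k + 0 : ℕ) : ℝ) * x ^ (2 * k + 0 - 1) / ((Nat.factorial k : ℝ) * (Nat.factorial (k + 0) : ℝ)) = 2 * B k := by
    intro k
    rw [hB]
    push_cast
    ring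
  have hBsucc : ∀ k : ℕ, B (k + 1) = x ^ (2 * k + 1) / ((Nat.factorial k : ℝ) * (Nat.factorial (k + 1) : ℝ)) := by
    intro k
    rw [hB]
    simp only
    have e1 : 2 * (k + 1) + 0 - 1 = 2 * k + 1 := by omega
    have e2 : (k + 1) + 0 = k + 1 := by ring
    rw [e1, e2, fact_cast_succ k]
    have h2 : (Nat.factorial k : ℝ) ≠ 0 := fact_ne k
    have h3 : (Nat.factorial (k + 1) : ℝ) ≠ 0 := fact_ne _
    have h4 : ((k : ℝ) + 1) ≠ 0 := by positivity
    field_simp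
    push_cast; ring
  have hBsum' : Summable fun k => B (k + 1) := by
    apply Summable.congr (summable_G_terms 1 x)
    intro k
    rw [hBsucc k]
  have hB0 : B 0 = 0 := by simp [hB]
  rw [tsum_congr hterm, tsum_mul_left, tsum_shift hBsum' hB0, tsum_congr hBsucc]
  rfl

lemma G_rec (m : ℕ) (x : ℝ) :
    x * G m x = ((m : ℝ) + 1) * G (m + 1) x + x * G (m + 2) x := by
  set D : ℕ → ℝ := fun k => ((m : ℝ) + 1) * (x ^ (2 * k + (m + 1)) / ((Nat.factorial k : ℝ) * (Nat.factorial (k + (m + 1)) : ℝ))) with hD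
  set E : ℕ → ℝ := fun k => (k : ℝ) * x ^ (2 * k + m + 1) / ((Nat.factorial k : ℝ) * (Nat.factorial (k + (m + 1)) : ℝ)) with hE
  have hEsucc : ∀ k : ℕ, E (k + 1) = x * (x ^ (2 * k + (m + 2)) / ((Nat.factorial k : ℝ) * (Nat.factorial (k + (m + 2)) : ℝ))) := by
    intro k
    rw [hE]
    simp only
    have e1 : 2 * (k + 1) + m + 1 = (2 * k + (m + 2)) + 1 := by ring
    have e2 : (k + 1) + (m + 1) = k + (m + 2) := by ring
    rw [e1, e2, fact_cast_succ k, pow_succ]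
    have h2 : (Nat.factorial k : ℝ) ≠ 0 := fact_ne k
    have h3 : (Nat.factorial (k + (m + 2)) : ℝ) ≠ 0 := fact_ne _
    have h4 : ((k : ℝ) + 1) ≠ 0 := by positivity
    field_simp
    push_cast; ring
  have hEsum' : Summable fun k => E (k + 1) := by
    apply Summable.congr ((summable_G_terms (m + 2) x).mul_left x)
    intro k
    rw [hEsucc k]
  have hE0 : E 0 = 0 := by simp [hE]
  have hterm : ∀ k : ℕ,
      x * (x ^ (2 * k + m) / ((Nat.factorial k : ℝ) * (Nat.factorial (k + m) : ℝ))) = D k + E k := by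
    intro k
    have e2 : k + (m + 1) = (k + m) + 1 := by ring
    rw [hD, hE]
    simp only
    rw [e2, fact_cast_succ (k + m), pow_succ, show 2 * k + (m+1) = (2*k+m)+1 from by ring, pow_succ]
    have h2 : (Nat.factorial k : ℝ) ≠ 0 := fact_ne k
    have h3 : (Nat.factorial (k + m) : ℝ) ≠ 0 := fact_ne _
    have h4 : ((k : ℝ) + (m : ℝ) + 1) ≠ 0 := by positivity
    field_simp
    push_cast; ring
  have lhs : x * G m x = ∑' k, (D k + E k) := by
    rw [G, ← tsum_mul_left]
    exact tsum_congr hterm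
  rw [lhs, Summable.tsum_add (((summable_G_terms (m+1) x).mul_left _))
    ((summable_nat_add_iff 1).mp hEsum'), tsum_shift hEsum' hE0, tsum_congr hEsucc,
    tsum_mul_left, tsum_mul_left]
  rfl


/-! ### The `ℤ`-indexed family -/

noncomputable def Z (n : ℤ) : ℝ → ℝ := G n.natAbs

lemma Z_neg (n : ℤ) : Z (-n) = Z n := by simp [Z]

lemma Z_coe (m : ℕ) : Z (m : ℤ) = G m := by simp [Z]

lemma hasDerivAt_Z_nat (m : ℕ) (x : ℝ) :
    HasDerivAt (Z ((m : ℤ) + 1)) (Z (m : ℤ) x + Z ((m : ℤ) + 2) x) x := by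
  have k1 : Z ((m : ℤ) + 1) = G (m + 1) := by
    rw [show ((m : ℤ) + 1) = ((m + 1 : ℕ) : ℤ) by push_cast; ring, Z_coe]
  have k3 : Z ((m : ℤ) + 2) = G (m + 2) := by
    rw [show ((m : ℤ) + 2) = ((m + 2 : ℕ) : ℤ) by push_cast; ring, Z_coe]
  rw [k1, k3, Z_coe]
  exact hasDerivAt_G_succ m x

lemma hasDerivAt_Z_zero (x : ℝ) :
    HasDerivAt (Z 0) (Z (0 - 1) x + Z (0 + 1) x) x := by
  have h1 : Z (0 - 1 : ℤ) = G 1 := by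
    rw [show (0 - 1 : ℤ) = -((1 : ℕ) : ℤ) by ring, Z_neg, Z_coe]
  have h2 : Z (0 + 1 : ℤ) = G 1 := by
    rw [show (0 + 1 : ℤ) = ((1 : ℕ) : ℤ) by ring, Z_coe]
  rw [h1, h2, show (Z 0 : ℝ → ℝ) = G 0 from Z_coe 0]
  have := hasDerivAt_G_zero x
  convert this using 1
  ring

lemma hasDerivAt_Z (n : ℤ) (x : ℝ) :
    HasDerivAt (Z n) (Z (n - 1) x + Z (n + 1) x) x := by
  obtain ⟨m, hm | hm⟩ := Int.eq_nat_or_neg n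
  · subst hm
    cases m with
    | zero => exact_mod_cast hasDerivAt_Z_zero x
    | succ j =>
      have e : ((j + 1 : ℕ) : ℤ) = (j : ℤ) + 1 := by push_cast; ring
      rw [e, show (j : ℤ) + 1 - 1 = (j : ℤ) by ring, show (j : ℤ) + 1 + 1 = (j : ℤ) + 2 by ring]
      exact hasDerivAt_Z_nat j x
  · subst hm
    cases m with
    | zero =>
      have : (-((0 : ℕ) : ℤ)) = 0 := by norm_num
      rw [this]
      exact hasDerivAt_Z_zero x
    | succ j =>
      have e : (-((j + 1 : ℕ) : ℤ)) = -((j : ℤ) + 1) := by push_cast; ring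
      rw [e, show -((j : ℤ) + 1) - 1 = -((j : ℤ) + 2) by ring,
        show -((j : ℤ) + 1) + 1 = -(j : ℤ) by ring, Z_neg, Z_neg, Z_neg]
      have h := hasDerivAt_Z_nat j x
      convert h using 1
      ring

lemma Z_rec_nat (m : ℕ) (x : ℝ) :
    ((m : ℝ) + 1) * Z ((m : ℤ) + 1) x = x * (Z (m : ℤ) x - Z ((m : ℤ) + 2) x) := by
  have k1 : Z ((m : ℤ) + 1) = G (m + 1) := by
    rw [show ((m : ℤ) + 1) = ((m + 1 : ℕ) : ℤ) by push_cast; ring, Z_coe]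
  have k3 : Z ((m : ℤ) + 2) = G (m + 2) := by
    rw [show ((m : ℤ) + 2) = ((m + 2 : ℕ) : ℤ) by push_cast; ring, Z_coe]
  rw [k1, k3, Z_coe]
  have h := G_rec m x
  push_cast
  push_cast at h
  linarith

lemma Z_rec (n : ℤ) (x : ℝ) :
    (n : ℝ) * Z n x = x * (Z (n - 1) x - Z (n + 1) x) := by
  obtain ⟨m, hm | hm⟩ := Int.eq_nat_or_neg n
  · subst hm
    cases m with
    | zero =>
      have h1 : Z (((0 : ℕ) : ℤ) - 1) = Z (((0 : ℕ) : ℤ) + 1) := by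
        rw [show (((0 : ℕ) : ℤ) - 1) = -(((0 : ℕ) : ℤ) + 1) by norm_num, Z_neg]
      rw [h1]
      push_cast
      ring
    | succ j =>
      have e : ((j + 1 : ℕ) : ℤ) = (j : ℤ) + 1 := by push_cast; ring
      rw [e, show (j : ℤ) + 1 - 1 = (j : ℤ) by ring, show (j : ℤ) + 1 + 1 = (j : ℤ) + 2 by ring]
      have h := Z_rec_nat j x
      push_cast
      push_cast at h
      linarith
  · subst hm
    cases m with
    | zero =>
      have h1 : Z ((-((0 : ℕ) : ℤ)) - 1) = Z ((-((0 : ℕ) : ℤ)) + 1) := by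
        rw [show ((-((0 : ℕ) : ℤ)) - 1) = -((-((0 : ℕ) : ℤ)) + 1) by norm_num, Z_neg]
      rw [h1]
      push_cast
      ring
    | succ j =>
      have e : (-((j + 1 : ℕ) : ℤ)) = -((j : ℤ) + 1) := by push_cast; ring
      rw [e, show -((j : ℤ) + 1) - 1 = -((j : ℤ) + 2) by ring,
        show -((j : ℤ) + 1) + 1 = -(j : ℤ) by ring, Z_neg, Z_neg, Z_neg]
      have h := Z_rec_nat j x
      push_cast
      push_cast at h
      linarith

lemma Z_bd (n : ℤ) {R y : ℝ} (hy : |y| ≤ R) :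
    |Z n y| ≤ Real.exp (R ^ 2 + 2 * R) * (1 / 2) ^ n.natAbs := G_bd n.natAbs hy

lemma Z_bd_one (n : ℤ) {R y : ℝ} (hy : |y| ≤ R) :
    |Z n y| ≤ Real.exp (R ^ 2 + 2 * R) := by
  refine le_trans (Z_bd n hy) ?_
  have h1 : ((1:ℝ)/2) ^ n.natAbs ≤ 1 := pow_le_one₀ (by norm_num) (by norm_num)
  nlinarith [Real.exp_pos (R ^ 2 + 2 * R)]

lemma half_pow_shift (n s : ℤ) :
    ((1:ℝ)/2) ^ (n + s).natAbs ≤ 2 ^ s.natAbs * (1/2) ^ n.natAbs := by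
  have htri : n.natAbs ≤ (n + s).natAbs + s.natAbs := by
    have := Int.natAbs_add_le (n + s) (-s)
    simpa using this
  by_cases h : s.natAbs ≤ n.natAbs
  · have h2 : n.natAbs - s.natAbs ≤ (n + s).natAbs := by omega
    have key : ((2:ℝ)) ^ s.natAbs * ((1/2:ℝ)) ^ s.natAbs = 1 := by
      rw [← mul_pow]; norm_num
    calc ((1:ℝ)/2) ^ (n + s).natAbs ≤ (1/2) ^ (n.natAbs - s.natAbs) :=
          pow_le_pow_of_le_one (by norm_num) (by norm_num) h2
      _ = 2 ^ s.natAbs * (1/2) ^ n.natAbs := by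
          set c := n.natAbs - s.natAbs with hc
          rw [show n.natAbs = c + s.natAbs from by omega, pow_add]
          linear_combination (-(((1:ℝ)/2) ^ c)) * key
  · have hn : s.natAbs = (s.natAbs - n.natAbs) + n.natAbs := by omega
    have key : ((2:ℝ)) ^ n.natAbs * ((1/2:ℝ)) ^ n.natAbs = 1 := by
      rw [← mul_pow]; norm_num
    calc ((1:ℝ)/2) ^ (n + s).natAbs ≤ 1 := pow_le_one₀ (by norm_num) (by norm_num)
      _ ≤ 2 ^ (s.natAbs - n.natAbs) := one_le_pow₀ (by norm_num)
      _ = 2 ^ s.natAbs * (1/2) ^ n.natAbs := by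
          set d := s.natAbs - n.natAbs with hd
          rw [show s.natAbs = d + n.natAbs from by omega, pow_add]
          linear_combination ((2:ℝ) ^ d) * key.symm

lemma Z_bd_shift (n s : ℤ) {R y : ℝ} (hy : |y| ≤ R) :
    |Z (n + s) y| ≤ Real.exp (R ^ 2 + 2 * R) * 2 ^ s.natAbs * (1/2) ^ n.natAbs := by
  refine le_trans (Z_bd (n + s) hy) ?_
  rw [mul_assoc]
  exact mul_le_mul_of_nonneg_left (half_pow_shift n s) (Real.exp_pos _).le

lemma summable_int_geom : Summable fun n : ℤ => ((1:ℝ)/2) ^ n.natAbs := by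
  apply Summable.of_nat_of_neg_add_one
  · exact Summable.congr (summable_geometric_of_lt_one (r := (1/2:ℝ)) (by norm_num) (by norm_num))
      (fun n => by simp)
  · refine Summable.congr ((summable_geometric_of_lt_one (r := (1/2:ℝ))
      (by norm_num) (by norm_num)).mul_left (1/2)) (fun n => ?_)
    simp only [Int.natAbs_neg]
    rw [show ((n : ℤ) + 1).natAbs = n + 1 by omega, pow_succ]
    ring


/-! ### Cluster sums -/

lemma abs_add6 (a b c d e f : ℝ) : |a+b+c+d+e+f| ≤ |a|+|b|+|c|+|d|+|e|+|f| := by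
  have h1 := abs_add_le (a+b+c+d+e) f
  have h2 := abs_add_le (a+b+c+d) e
  have h3 := abs_add_le (a+b+c) d
  have h4 := abs_add_le (a+b) c
  have h5 := abs_add_le a b
  linarith

lemma mul3_abs_le {a b c A B C : ℝ} (ha : |a| ≤ A) (hb : |b| ≤ B) (hc : |c| ≤ C) :
    |a * b * c| ≤ A * B * C := by
  rw [abs_mul, abs_mul]
  have h0a := abs_nonneg a
  have h0b := abs_nonneg b
  have h0c := abs_nonneg c
  have hA : 0 ≤ A := le_trans h0a ha
  have hB : 0 ≤ B := le_trans h0b hb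
  exact mul_le_mul (mul_le_mul ha hb h0b hA) hc h0c (by positivity)

lemma summable_cluster (s t u : ℤ) (y : ℝ) :
    Summable fun n : ℤ => Z (n + s) y * Z (n + t) y * Z (n + u) y := by
  set C := Real.exp (|y| ^ 2 + 2 * |y|) with hC
  apply Summable.of_norm_bounded (g := fun n : ℤ => C * 2 ^ s.natAbs * C * C * (1/2) ^ n.natAbs)
    (summable_int_geom.mul_left _)
  intro n
  rw [Real.norm_eq_abs]
  have h1 := Z_bd_shift n s (le_refl |y|)
  have h2 := Z_bd_one (n + t) (le_refl |y|)
  have h3 := Z_bd_one (n + u) (le_refl |y|)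
  refine le_trans (mul3_abs_le h1 h2 h3) (le_of_eq ?_)
  ring

lemma summable_cluster' (a b c : ℤ) (x : ℝ) (f : ℤ → ℝ)
    (hf : ∀ n, f n = Z (n + a) x * Z (n + b) x * Z (n + c) x) : Summable f :=
  (summable_cluster a b c x).congr (fun n => (hf n).symm)

lemma hasDerivAt_cluster (s t u : ℤ) (x : ℝ) :
    HasDerivAt (fun y => ∑' n : ℤ, Z (n + s) y * Z (n + t) y * Z (n + u) y)
      (∑' n : ℤ,
        ((Z (n + s - 1) x + Z (n + s + 1) x) * Z (n + t) x * Z (n + u) x +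
         Z (n + s) x * (Z (n + t - 1) x + Z (n + t + 1) x) * Z (n + u) x +
         Z (n + s) x * Z (n + t) x * (Z (n + u - 1) x + Z (n + u + 1) x))) x := by
  apply hasDerivAt_tsum_loc
    (f' := fun (n : ℤ) (y : ℝ) =>
        (Z (n + s - 1) y + Z (n + s + 1) y) * Z (n + t) y * Z (n + u) y +
         Z (n + s) y * (Z (n + t - 1) y + Z (n + t + 1) y) * Z (n + u) y +
         Z (n + s) y * Z (n + t) y * (Z (n + u - 1) y + Z (n + u + 1) y))
  · intro n y
    have h := ((hasDerivAt_Z (n + s) y).mul (hasDerivAt_Z (n + t) y)).mul (hasDerivAt_Z (n + u) y)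
    convert h using 1
    · rfl
    · rfl
    · rfl
    simp only [Pi.mul_apply]
    ring
  · exact fun y => summable_cluster s t u y
  · intro R hR
    set C := Real.exp (R ^ 2 + 2 * R) with hC
    have hC0 : 0 < C := Real.exp_pos _
    refine ⟨fun n : ℤ => 6 * (C * C * C * 2 ^ (s.natAbs + 1)) * (1/2) ^ n.natAbs,
      (summable_int_geom.mul_left _), fun n y hy => ?_⟩
    have mono : ∀ v w w' : ℤ, v.natAbs ≤ s.natAbs + 1 →
        |Z (n + v) y * Z (n + w) y * Z (n + w') y| ≤ C * C * C * 2 ^ (s.natAbs + 1) * (1/2) ^ n.natAbs := by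
      intro v w w' hv
      have h1 := Z_bd_shift n v hy
      have h2 := Z_bd_one (n + w) hy
      have h3 := Z_bd_one (n + w') hy
      refine le_trans (mul3_abs_le h1 h2 h3) ?_
      have h4 : (2:ℝ) ^ v.natAbs ≤ 2 ^ (s.natAbs + 1) := pow_le_pow_right₀ one_le_two hv
      have h5 : (0:ℝ) ≤ (1/2) ^ n.natAbs := by positivity
      calc C * 2 ^ v.natAbs * (1/2) ^ n.natAbs * C * C
          = (C * C * C * (1/2) ^ n.natAbs) * 2 ^ v.natAbs := by ring
        _ ≤ (C * C * C * (1/2) ^ n.natAbs) * 2 ^ (s.natAbs + 1) := by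
            apply mul_le_mul_of_nonneg_left h4 (by positivity)
        _ = C * C * C * 2 ^ (s.natAbs + 1) * (1/2) ^ n.natAbs := by ring
    have e1 : n + s - 1 = n + (s - 1) := by ring
    have e2 : n + s + 1 = n + (s + 1) := by ring
    have e3 : n + t - 1 = n + (t - 1) := by ring
    have e4 : n + t + 1 = n + (t + 1) := by ring
    have e5 : n + u - 1 = n + (u - 1) := by ring
    have e6 : n + u + 1 = n + (u + 1) := by ring
    have expand : (Z (n + s - 1) y + Z (n + s + 1) y) * Z (n + t) y * Z (n + u) y +
         Z (n + s) y * (Z (n + t - 1) y + Z (n + t + 1) y) * Z (n + u) y +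
         Z (n + s) y * Z (n + t) y * (Z (n + u - 1) y + Z (n + u + 1) y)
        = Z (n + (s-1)) y * Z (n + t) y * Z (n + u) y
        + Z (n + (s+1)) y * Z (n + t) y * Z (n + u) y
        + Z (n + s) y * Z (n + (t-1)) y * Z (n + u) y
        + Z (n + s) y * Z (n + (t+1)) y * Z (n + u) y
        + Z (n + s) y * Z (n + t) y * Z (n + (u-1)) y
        + Z (n + s) y * Z (n + t) y * Z (n + (u+1)) y := by
      rw [e1, e2, e3, e4, e5, e6]; ring
    rw [expand]
    have m1 := mono (s-1) t u (by omega)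
    have m2 := mono (s+1) t u (by omega)
    have m3' : ∀ w w', |Z (n + s) y * Z (n + w) y * Z (n + w') y| ≤
        C * C * C * 2 ^ (s.natAbs + 1) * (1/2) ^ n.natAbs := fun w w' => by
      have hcomm : Z (n + s) y * Z (n + w) y * Z (n + w') y
          = Z (n + s) y * Z (n + w) y * Z (n + w') y := rfl
      exact mono s w w' (by omega)
    set K := C * C * C * 2 ^ (s.natAbs + 1) * (1/2) ^ n.natAbs with hK
    show _ ≤ 6 * (C * C * C * 2 ^ (s.natAbs + 1)) * (1/2) ^ n.natAbs
    refine le_trans (abs_add6 _ _ _ _ _ _) ?_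
    have m4 := m3' (t-1) u
    have m5 := m3' (t+1) u
    have m6 := m3' t (u-1)
    have m7 := m3' t (u+1)
    rw [hK] at m1 m2 m4 m5 m6 m7
    linarith

lemma tsum_int_shift (f : ℤ → ℝ) (k : ℤ) : ∑' n : ℤ, f (n + k) = ∑' n : ℤ, f n :=
  (Equiv.addRight k).tsum_eq f

lemma tsum_int_reflect (f : ℤ → ℝ) (k : ℤ) : ∑' n : ℤ, f (k - n) = ∑' n : ℤ, f n := by
  have := ((Equiv.neg ℤ).trans (Equiv.addLeft k)).tsum_eq f
  simp only [Equiv.trans_apply, Equiv.neg_apply, Equiv.coe_addLeft] at this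
  rw [← this]
  exact tsum_congr fun n => by rw [sub_eq_add_neg]


/-! ### The six canonical cluster sums -/

noncomputable def Pf (x : ℝ) : ℝ := ∑' n : ℤ, Z n x * Z n x * Z n x
noncomputable def Tf (x : ℝ) : ℝ := ∑' n : ℤ, Z n x * Z n x * Z (n+1) x
noncomputable def Rf (x : ℝ) : ℝ := ∑' n : ℤ, Z n x * Z (n+1) x * Z (n+2) x
noncomputable def Vf (x : ℝ) : ℝ := ∑' n : ℤ, Z n x * Z n x * Z (n+2) x
noncomputable def W1f (x : ℝ) : ℝ := ∑' n : ℤ, Z n x * Z (n+2) x * Z (n+3) x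
noncomputable def Yf (x : ℝ) : ℝ := ∑' n : ℤ, Z n x * Z n x * Z (n+3) x

variable {x : ℝ}

lemma E2 (x : ℝ) : ∑' n : ℤ, Z (n+1) x * Z n x * Z n x = Tf x :=
  tsum_congr fun n => by ring

lemma E3 (x : ℝ) : ∑' n : ℤ, Z n x * Z (n+1) x * Z (n+1) x = Tf x := by
  have h := tsum_int_reflect (fun n => Z n x * Z (n+1) x * Z (n+1) x) (-1)
  rw [← h]
  refine tsum_congr fun n => ?_
  rw [show (-1 - n + 1 : ℤ) = -n by ring, show (-1 - n : ℤ) = -(n+1) by ring, Z_neg, Z_neg]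
  ring

lemma E1 (x : ℝ) : ∑' n : ℤ, Z (n-1) x * Z n x * Z n x = Tf x := by
  rw [← tsum_int_shift (fun n => Z (n-1) x * Z n x * Z n x) 1, ← E3 x]
  refine tsum_congr fun n => ?_
  rw [show (n + 1 - 1 : ℤ) = n by ring]

lemma E4 (x : ℝ) : ∑' n : ℤ, Z (n+1) x * Z (n+1) x * Z (n+2) x = Tf x := by
  rw [← tsum_int_shift (fun n => Z (n+1) x * Z (n+1) x * Z (n+2) x) (-1)]
  refine tsum_congr fun n => ?_
  rw [show (n + -1 + 1 : ℤ) = n by ring, show (n + -1 + 2 : ℤ) = n + 1 by ring]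

lemma E5 (x : ℝ) : ∑' n : ℤ, Z n x * Z (n+2) x * Z (n+2) x = Vf x := by
  have h := tsum_int_reflect (fun n => Z n x * Z (n+2) x * Z (n+2) x) (-2)
  rw [← h]
  refine tsum_congr fun n => ?_
  rw [show (-2 - n + 2 : ℤ) = -n by ring, show (-2 - n : ℤ) = -(n+2) by ring, Z_neg, Z_neg]
  ring

lemma E6 (x : ℝ) : ∑' n : ℤ, Z n x * Z (n+1) x * Z (n+3) x = W1f x := by
  have h := tsum_int_reflect (fun n => Z n x * Z (n+1) x * Z (n+3) x) (-3)
  rw [← h]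
  refine tsum_congr fun n => ?_
  rw [show (-3 - n + 1 : ℤ) = -(n+2) by ring, show (-3 - n + 3 : ℤ) = -n by ring,
    show (-3 - n : ℤ) = -(n+3) by ring, Z_neg, Z_neg, Z_neg]
  ring

lemma E7 (x : ℝ) : ∑' n : ℤ, Z (n-1) x * Z n x * Z (n+1) x = Rf x := by
  rw [← tsum_int_shift (fun n => Z (n-1) x * Z n x * Z (n+1) x) 1]
  refine tsum_congr fun n => ?_
  rw [show (n + 1 - 1 : ℤ) = n by ring, show (n + 1 + 1 : ℤ) = n + 2 by ring]

lemma E8 (x : ℝ) : ∑' n : ℤ, Z (n-1) x * Z (n+1) x * Z (n+2) x = W1f x := by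
  rw [← tsum_int_shift (fun n => Z (n-1) x * Z (n+1) x * Z (n+2) x) 1]
  refine tsum_congr fun n => ?_
  rw [show (n + 1 - 1 : ℤ) = n by ring, show (n + 1 + 1 : ℤ) = n + 2 by ring,
    show (n + 1 + 2 : ℤ) = n + 3 by ring]

lemma E9 (x : ℝ) : ∑' n : ℤ, Z (n-1) x * Z n x * Z (n+2) x = W1f x := by
  rw [← tsum_int_shift (fun n => Z (n-1) x * Z n x * Z (n+2) x) 1, ← E6 x]
  refine tsum_congr fun n => ?_
  rw [show (n + 1 - 1 : ℤ) = n by ring, show (n + 1 + 2 : ℤ) = n + 3 by ring]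

lemma E10 (x : ℝ) : ∑' n : ℤ, Z (n+1) x * Z n x * Z (n+2) x = Rf x :=
  tsum_congr fun n => by ring

/-! ### Summability of shifted clusters -/

lemma sm (a b c : ℤ) (x : ℝ) (f : ℤ → ℝ)
    (hf : ∀ n, f n = Z (n + a) x * Z (n + b) x * Z (n + c) x) : Summable f :=
  (summable_cluster a b c x).congr (fun n => (hf n).symm)

lemma sm_m1_0_0 (x : ℝ) : Summable fun n : ℤ => Z (n-1) x * Z n x * Z n x :=
  sm (-1) 0 0 x _ (fun n => by rw [show n + -1 = n - 1 by ring, add_zero])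

lemma sm_p1_0_0 (x : ℝ) : Summable fun n : ℤ => Z (n+1) x * Z n x * Z n x :=
  sm 1 0 0 x _ (fun n => by rw [add_zero])

lemma sm_0_0_0 (x : ℝ) : Summable fun n : ℤ => Z n x * Z n x * Z n x :=
  sm 0 0 0 x _ (fun n => by rw [add_zero])

lemma sm_0_0_p1 (x : ℝ) : Summable fun n : ℤ => Z n x * Z n x * Z (n+1) x :=
  sm 0 0 1 x _ (fun n => by rw [add_zero])

lemma sm_0_0_p2 (x : ℝ) : Summable fun n : ℤ => Z n x * Z n x * Z (n+2) x :=
  sm 0 0 2 x _ (fun n => by rw [add_zero])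

lemma sm_0_0_p3 (x : ℝ) : Summable fun n : ℤ => Z n x * Z n x * Z (n+3) x :=
  sm 0 0 3 x _ (fun n => by rw [add_zero])

lemma sm_0_p1_p1 (x : ℝ) : Summable fun n : ℤ => Z n x * Z (n+1) x * Z (n+1) x :=
  sm 0 1 1 x _ (fun n => by rw [add_zero])

lemma sm_0_p1_p2 (x : ℝ) : Summable fun n : ℤ => Z n x * Z (n+1) x * Z (n+2) x :=
  sm 0 1 2 x _ (fun n => by rw [add_zero])

lemma sm_0_p2_p2 (x : ℝ) : Summable fun n : ℤ => Z n x * Z (n+2) x * Z (n+2) x :=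
  sm 0 2 2 x _ (fun n => by rw [add_zero])

lemma sm_0_p1_p3 (x : ℝ) : Summable fun n : ℤ => Z n x * Z (n+1) x * Z (n+3) x :=
  sm 0 1 3 x _ (fun n => by rw [add_zero])

lemma sm_0_p2_p3 (x : ℝ) : Summable fun n : ℤ => Z n x * Z (n+2) x * Z (n+3) x :=
  sm 0 2 3 x _ (fun n => by rw [add_zero])

lemma sm_m1_0_p1 (x : ℝ) : Summable fun n : ℤ => Z (n-1) x * Z n x * Z (n+1) x :=
  sm (-1) 0 1 x _ (fun n => by rw [show n + -1 = n - 1 by ring, add_zero])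

lemma sm_m1_0_p2 (x : ℝ) : Summable fun n : ℤ => Z (n-1) x * Z n x * Z (n+2) x :=
  sm (-1) 0 2 x _ (fun n => by rw [show n + -1 = n - 1 by ring, add_zero])

lemma sm_m1_p1_p2 (x : ℝ) : Summable fun n : ℤ => Z (n-1) x * Z (n+1) x * Z (n+2) x :=
  sm (-1) 1 2 x _ (fun n => by rw [show n + -1 = n - 1 by ring])

lemma sm_p1_p1_p2 (x : ℝ) : Summable fun n : ℤ => Z (n+1) x * Z (n+1) x * Z (n+2) x :=
  sm 1 1 2 x _ (fun n => rfl)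

lemma sm_p1_0_p2 (x : ℝ) : Summable fun n : ℤ => Z (n+1) x * Z n x * Z (n+2) x :=
  sm 1 0 2 x _ (fun n => by rw [add_zero])


/-! ### Derivatives of the cluster sums -/

lemma hasDerivAt_Pf (x : ℝ) : HasDerivAt Pf (6 * Tf x) x := by
  have h := hasDerivAt_cluster 0 0 0 x
  have hfun : (fun y => ∑' n : ℤ, Z (n + 0) y * Z (n + 0) y * Z (n + 0) y) = Pf := by
    funext y
    exact tsum_congr fun n => by rw [add_zero]
  rw [hfun] at h
  have step1 : ∀ n : ℤ,
      ((Z (n + 0 - 1) x + Z (n + 0 + 1) x) * Z (n + 0) x * Z (n + 0) x +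
       Z (n + 0) x * (Z (n + 0 - 1) x + Z (n + 0 + 1) x) * Z (n + 0) x +
       Z (n + 0) x * Z (n + 0) x * (Z (n + 0 - 1) x + Z (n + 0 + 1) x))
      = 3 * (Z (n-1) x * Z n x * Z n x) + 3 * (Z (n+1) x * Z n x * Z n x) := by
    intro n
    rw [show (n + 0 - 1 : ℤ) = n - 1 by ring, show (n + 0 + 1 : ℤ) = n + 1 by ring, add_zero]
    ring
  have hval : (∑' n : ℤ,
      ((Z (n + 0 - 1) x + Z (n + 0 + 1) x) * Z (n + 0) x * Z (n + 0) x +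
       Z (n + 0) x * (Z (n + 0 - 1) x + Z (n + 0 + 1) x) * Z (n + 0) x +
       Z (n + 0) x * Z (n + 0) x * (Z (n + 0 - 1) x + Z (n + 0 + 1) x)))
      = 6 * Tf x := by
    rw [tsum_congr step1,
      Summable.tsum_add ((sm_m1_0_0 x).mul_left 3) ((sm_p1_0_0 x).mul_left 3),
      tsum_mul_left, tsum_mul_left, E1, E2]
    ring
  rw [hval] at h
  exact h

lemma hasDerivAt_Tf (x : ℝ) :
    HasDerivAt Tf (Pf x + 2 * Tf x + 2 * Rf x + Vf x) x := by
  have h := hasDerivAt_cluster 0 0 1 x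
  have hfun : (fun y => ∑' n : ℤ, Z (n + 0) y * Z (n + 0) y * Z (n + 1) y) = Tf := by
    funext y
    exact tsum_congr fun n => by rw [add_zero]
  rw [hfun] at h
  have step1 : ∀ n : ℤ,
      ((Z (n + 0 - 1) x + Z (n + 0 + 1) x) * Z (n + 0) x * Z (n + 1) x +
       Z (n + 0) x * (Z (n + 0 - 1) x + Z (n + 0 + 1) x) * Z (n + 1) x +
       Z (n + 0) x * Z (n + 0) x * (Z (n + 1 - 1) x + Z (n + 1 + 1) x))
      = 2 * (Z (n-1) x * Z n x * Z (n+1) x) + 2 * (Z n x * Z (n+1) x * Z (n+1) x)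
        + Z n x * Z n x * Z n x + Z n x * Z n x * Z (n+2) x := by
    intro n
    rw [show (n + 0 - 1 : ℤ) = n - 1 by ring, show (n + 0 + 1 : ℤ) = n + 1 by ring,
      show (n + 1 - 1 : ℤ) = n by ring, show (n + 1 + 1 : ℤ) = n + 2 by ring, add_zero]
    ring
  have hval : (∑' n : ℤ,
      ((Z (n + 0 - 1) x + Z (n + 0 + 1) x) * Z (n + 0) x * Z (n + 1) x +
       Z (n + 0) x * (Z (n + 0 - 1) x + Z (n + 0 + 1) x) * Z (n + 1) x +
       Z (n + 0) x * Z (n + 0) x * (Z (n + 1 - 1) x + Z (n + 1 + 1) x)))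
      = Pf x + 2 * Tf x + 2 * Rf x + Vf x := by
    rw [tsum_congr step1,
      Summable.tsum_add ((((sm_m1_0_p1 x).mul_left 2).add ((sm_0_p1_p1 x).mul_left 2)).add (sm_0_0_0 x)) (sm_0_0_p2 x),
      Summable.tsum_add (((sm_m1_0_p1 x).mul_left 2).add ((sm_0_p1_p1 x).mul_left 2)) (sm_0_0_0 x),
      Summable.tsum_add ((sm_m1_0_p1 x).mul_left 2) ((sm_0_p1_p1 x).mul_left 2),
      tsum_mul_left, tsum_mul_left, E7, E3]
    show 2 * Rf x + 2 * Tf x + Pf x + Vf x = _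
    ring
  rw [hval] at h
  exact h

lemma hasDerivAt_Rf (x : ℝ) :
    HasDerivAt Rf (2 * W1f x + 2 * Tf x + 2 * Vf x) x := by
  have h := hasDerivAt_cluster 0 1 2 x
  have hfun : (fun y => ∑' n : ℤ, Z (n + 0) y * Z (n + 1) y * Z (n + 2) y) = Rf := by
    funext y
    exact tsum_congr fun n => by rw [add_zero]
  rw [hfun] at h
  have step1 : ∀ n : ℤ,
      ((Z (n + 0 - 1) x + Z (n + 0 + 1) x) * Z (n + 1) x * Z (n + 2) x +
       Z (n + 0) x * (Z (n + 1 - 1) x + Z (n + 1 + 1) x) * Z (n + 2) x +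
       Z (n + 0) x * Z (n + 1) x * (Z (n + 2 - 1) x + Z (n + 2 + 1) x))
      = Z (n-1) x * Z (n+1) x * Z (n+2) x + Z (n+1) x * Z (n+1) x * Z (n+2) x
        + Z n x * Z n x * Z (n+2) x + Z n x * Z (n+2) x * Z (n+2) x
        + Z n x * Z (n+1) x * Z (n+1) x + Z n x * Z (n+1) x * Z (n+3) x := by
    intro n
    rw [show (n + 0 - 1 : ℤ) = n - 1 by ring, show (n + 0 + 1 : ℤ) = n + 1 by ring,
      show (n + 1 - 1 : ℤ) = n by ring, show (n + 1 + 1 : ℤ) = n + 2 by ring,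
      show (n + 2 - 1 : ℤ) = n + 1 by ring, show (n + 2 + 1 : ℤ) = n + 3 by ring, add_zero]
    ring
  have hval : (∑' n : ℤ,
      ((Z (n + 0 - 1) x + Z (n + 0 + 1) x) * Z (n + 1) x * Z (n + 2) x +
       Z (n + 0) x * (Z (n + 1 - 1) x + Z (n + 1 + 1) x) * Z (n + 2) x +
       Z (n + 0) x * Z (n + 1) x * (Z (n + 2 - 1) x + Z (n + 2 + 1) x)))
      = 2 * W1f x + 2 * Tf x + 2 * Vf x := by
    rw [tsum_congr step1,
      Summable.tsum_add (((((sm_m1_p1_p2 x).add (sm_p1_p1_p2 x)).add (sm_0_0_p2 x)).add (sm_0_p2_p2 x)).add (sm_0_p1_p1 x)) (sm_0_p1_p3 x),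
      Summable.tsum_add ((((sm_m1_p1_p2 x).add (sm_p1_p1_p2 x)).add (sm_0_0_p2 x)).add (sm_0_p2_p2 x)) (sm_0_p1_p1 x),
      Summable.tsum_add (((sm_m1_p1_p2 x).add (sm_p1_p1_p2 x)).add (sm_0_0_p2 x)) (sm_0_p2_p2 x),
      Summable.tsum_add ((sm_m1_p1_p2 x).add (sm_p1_p1_p2 x)) (sm_0_0_p2 x),
      Summable.tsum_add (sm_m1_p1_p2 x) (sm_p1_p1_p2 x),
      E8, E4, E5, E3, E6]
    show W1f x + Tf x + Vf x + Vf x + Tf x + W1f x = _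
    ring
  rw [hval] at h
  exact h

lemma hasDerivAt_Vf (x : ℝ) :
    HasDerivAt Vf (2 * W1f x + 2 * Rf x + Tf x + Yf x) x := by
  have h := hasDerivAt_cluster 0 0 2 x
  have hfun : (fun y => ∑' n : ℤ, Z (n + 0) y * Z (n + 0) y * Z (n + 2) y) = Vf := by
    funext y
    exact tsum_congr fun n => by rw [add_zero]
  rw [hfun] at h
  have step1 : ∀ n : ℤ,
      ((Z (n + 0 - 1) x + Z (n + 0 + 1) x) * Z (n + 0) x * Z (n + 2) x +
       Z (n + 0) x * (Z (n + 0 - 1) x + Z (n + 0 + 1) x) * Z (n + 2) x +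
       Z (n + 0) x * Z (n + 0) x * (Z (n + 2 - 1) x + Z (n + 2 + 1) x))
      = 2 * (Z (n-1) x * Z n x * Z (n+2) x) + 2 * (Z (n+1) x * Z n x * Z (n+2) x)
        + Z n x * Z n x * Z (n+1) x + Z n x * Z n x * Z (n+3) x := by
    intro n
    rw [show (n + 0 - 1 : ℤ) = n - 1 by ring, show (n + 0 + 1 : ℤ) = n + 1 by ring,
      show (n + 2 - 1 : ℤ) = n + 1 by ring, show (n + 2 + 1 : ℤ) = n + 3 by ring, add_zero]
    ring
  have hval : (∑' n : ℤ,
      ((Z (n + 0 - 1) x + Z (n + 0 + 1) x) * Z (n + 0) x * Z (n + 2) x +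
       Z (n + 0) x * (Z (n + 0 - 1) x + Z (n + 0 + 1) x) * Z (n + 2) x +
       Z (n + 0) x * Z (n + 0) x * (Z (n + 2 - 1) x + Z (n + 2 + 1) x)))
      = 2 * W1f x + 2 * Rf x + Tf x + Yf x := by
    rw [tsum_congr step1,
      Summable.tsum_add ((((sm_m1_0_p2 x).mul_left 2).add ((sm_p1_0_p2 x).mul_left 2)).add (sm_0_0_p1 x)) (sm_0_0_p3 x),
      Summable.tsum_add (((sm_m1_0_p2 x).mul_left 2).add ((sm_p1_0_p2 x).mul_left 2)) (sm_0_0_p1 x),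
      Summable.tsum_add ((sm_m1_0_p2 x).mul_left 2) ((sm_p1_0_p2 x).mul_left 2),
      tsum_mul_left, tsum_mul_left, E9, E10]
    show 2 * W1f x + 2 * Rf x + Tf x + Yf x = _
    rfl
  rw [hval] at h
  exact h

/-! ### The three contiguous relations -/

lemma rel1 (x : ℝ) : x * Rf x - x * Tf x = x * Pf x - x * Vf x - Tf x := by
  have key : ∀ n : ℤ,
      x * (Z (n-1) x * Z n x * Z (n+1) x) - x * (Z n x * Z (n+1) x * Z (n+1) x)
      = (x * (Z n x * Z n x * Z n x) - x * (Z n x * Z n x * Z (n+2) x))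
        - Z n x * Z n x * Z (n+1) x := by
    intro n
    have h1 := Z_rec n x
    have h2 := Z_rec (n+1) x
    rw [show (n + 1 - 1 : ℤ) = n by ring, show (n + 1 + 1 : ℤ) = n + 2 by ring] at h2
    push_cast at h2
    linear_combination (-(Z n x * Z (n+1) x)) * h1 + (Z n x * Z n x) * h2
  have hs := tsum_congr (L := SummationFilter.unconditional ℤ) key
  rw [Summable.tsum_sub ((sm_m1_0_p1 x).mul_left x) ((sm_0_p1_p1 x).mul_left x),
    Summable.tsum_sub (((sm_0_0_0 x).mul_left x).sub ((sm_0_0_p2 x).mul_left x)) (sm_0_0_p1 x),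
    Summable.tsum_sub ((sm_0_0_0 x).mul_left x) ((sm_0_0_p2 x).mul_left x),
    tsum_mul_left, tsum_mul_left, tsum_mul_left, tsum_mul_left, E7, E3] at hs
  show x * Rf x - x * Tf x = x * Pf x - x * Vf x - Tf x
  exact hs

lemma rel2 (x : ℝ) : x * W1f x - x * Tf x = x * Tf x - x * W1f x - 2 * Rf x := by
  have key : ∀ n : ℤ,
      x * (Z (n-1) x * Z (n+1) x * Z (n+2) x) - x * (Z (n+1) x * Z (n+1) x * Z (n+2) x)
      = (x * (Z n x * Z (n+1) x * Z (n+1) x) - x * (Z n x * Z (n+1) x * Z (n+3) x))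
        - 2 * (Z n x * Z (n+1) x * Z (n+2) x) := by
    intro n
    have h1 := Z_rec n x
    have h3 := Z_rec (n+2) x
    rw [show (n + 2 - 1 : ℤ) = n + 1 by ring, show (n + 2 + 1 : ℤ) = n + 3 by ring] at h3
    push_cast at h3
    linear_combination (-(Z (n+1) x * Z (n+2) x)) * h1 + (Z n x * Z (n+1) x) * h3
  have hs := tsum_congr (L := SummationFilter.unconditional ℤ) key
  rw [Summable.tsum_sub ((sm_m1_p1_p2 x).mul_left x) ((sm_p1_p1_p2 x).mul_left x),
    Summable.tsum_sub (((sm_0_p1_p1 x).mul_left x).sub ((sm_0_p1_p3 x).mul_left x)) ((sm_0_p1_p2 x).mul_left 2),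
    Summable.tsum_sub ((sm_0_p1_p1 x).mul_left x) ((sm_0_p1_p3 x).mul_left x),
    tsum_mul_left, tsum_mul_left, tsum_mul_left, tsum_mul_left, tsum_mul_left,
    E8, E4, E3, E6] at hs
  exact hs

lemma rel3 (x : ℝ) : x * W1f x - x * Rf x = x * Tf x - x * Yf x - 2 * Vf x := by
  have key : ∀ n : ℤ,
      x * (Z (n-1) x * Z n x * Z (n+2) x) - x * (Z (n+1) x * Z n x * Z (n+2) x)
      = (x * (Z n x * Z n x * Z (n+1) x) - x * (Z n x * Z n x * Z (n+3) x))
        - 2 * (Z n x * Z n x * Z (n+2) x) := by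
    intro n
    have h1 := Z_rec n x
    have h3 := Z_rec (n+2) x
    rw [show (n + 2 - 1 : ℤ) = n + 1 by ring, show (n + 2 + 1 : ℤ) = n + 3 by ring] at h3
    push_cast at h3
    linear_combination (-(Z n x * Z (n+2) x)) * h1 + (Z n x * Z n x) * h3
  have hs := tsum_congr (L := SummationFilter.unconditional ℤ) key
  rw [Summable.tsum_sub ((sm_m1_0_p2 x).mul_left x) ((sm_p1_0_p2 x).mul_left x),
    Summable.tsum_sub (((sm_0_0_p1 x).mul_left x).sub ((sm_0_0_p3 x).mul_left x)) ((sm_0_0_p2 x).mul_left 2),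
    Summable.tsum_sub ((sm_0_0_p1 x).mul_left x) ((sm_0_0_p3 x).mul_left x),
    tsum_mul_left, tsum_mul_left, tsum_mul_left, tsum_mul_left, tsum_mul_left,
    E9, E10] at hs
  exact hs


/-! ### `S` equals the symmetric cluster sum -/

lemma Z_coe_add_one (n : ℕ) : Z ((n : ℤ) + 1) = G (n + 1) := by
  rw [show ((n : ℤ) + 1) = ((n + 1 : ℕ) : ℤ) by push_cast; ring, Z_coe]

lemma S_eq_Pf : S = Pf := by
  funext x
  set f : ℤ → ℝ := fun n => Z n x * Z n x * Z n x with hfdef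
  have hneg : ∀ n : ℤ, f (-n) = f n := fun n => by rw [hfdef]; simp only; rw [Z_neg]
  have hf : Summable f := sm_0_0_0 x
  have hf1 : Summable fun n : ℕ => f n :=
    hf.comp_injective (fun a b h => by exact_mod_cast h)
  have hinj : Function.Injective (fun n : ℕ => -((n : ℤ) + 1)) := by
    intro a b h
    simp only at h
    omega
  have hf2 : Summable fun n : ℕ => f (-((n : ℤ) + 1)) := hf.comp_injective hinj
  have split := tsum_of_nat_of_neg_add_one hf1 hf2
  have hPf : Pf x = ∑' n : ℤ, f n := rfl
  have hsecond : ∑' n : ℕ, f (-((n : ℤ) + 1)) = ∑' n : ℕ, f ((n : ℤ) + 1) :=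
    tsum_congr fun n => hneg _
  have hfirst : ∑' n : ℕ, f ((n : ℤ)) = f ((0 : ℕ) : ℤ) + ∑' n : ℕ, f (((n + 1 : ℕ) : ℤ)) :=
    Summable.tsum_eq_zero_add hf1
  have hcast : ∑' n : ℕ, f (((n + 1 : ℕ) : ℤ)) = ∑' n : ℕ, f ((n : ℤ) + 1) :=
    tsum_congr fun n => by norm_cast
  have hterm : ∀ n : ℕ, f ((n : ℤ) + 1) = besselI (n + 1) (2 * x) ^ 3 := by
    intro n
    rw [hfdef]
    simp only
    rw [Z_coe_add_one, besselI_eq_G]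
    ring
  have hzero : f ((0 : ℕ) : ℤ) = besselI 0 (2 * x) ^ 3 := by
    rw [hfdef]
    simp only
    rw [show ((0 : ℕ) : ℤ) = ((0:ℕ) : ℤ) from rfl, Z_coe, besselI_eq_G]
    ring
  rw [hPf, split, hsecond, hfirst, hcast, hzero, tsum_congr hterm]
  show S x = besselI 0 (2*x) ^ 3 + (∑' n : ℕ, besselI (n+1) (2*x) ^ 3) + ∑' n : ℕ, besselI (n+1) (2*x) ^ 3
  rw [S]
  ring

end BesselAux

open BesselAux in
/-- `S` is three times differentiable and is annihilated by the operator
`x²D³ − (x²−3x)D² − (24x²+2x−1)D − (36x²+24x)`. -/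
theorem sum_besselI_cubed_annihilated :
    Differentiable ℝ S ∧ Differentiable ℝ (deriv S) ∧ Differentiable ℝ (deriv (deriv S)) ∧
    ∀ x : ℝ,
      x ^ 2 * deriv (deriv (deriv S)) x - (x ^ 2 - 3 * x) * deriv (deriv S) x -
        (24 * x ^ 2 + 2 * x - 1) * deriv S x - (36 * x ^ 2 + 24 * x) * S x = 0 := by
  have hd1 : ∀ y : ℝ, HasDerivAt S (6 * Tf y) y := by
    intro y
    rw [S_eq_Pf]
    exact hasDerivAt_Pf y
  have hderiv1 : deriv S = fun y => 6 * Tf y := funext fun y => (hd1 y).deriv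
  have hd2 : ∀ y : ℝ, HasDerivAt (deriv S) (6 * (Pf y + 2 * Tf y + 2 * Rf y + Vf y)) y := by
    intro y
    rw [hderiv1]
    exact (hasDerivAt_Tf y).const_mul 6
  have hderiv2 : deriv (deriv S) = fun y => 6 * (Pf y + 2 * Tf y + 2 * Rf y + Vf y) :=
    funext fun y => (hd2 y).deriv
  have hd3 : ∀ y : ℝ, HasDerivAt (deriv (deriv S))
      (6 * (6 * Tf y + 2 * (Pf y + 2 * Tf y + 2 * Rf y + Vf y) +
        2 * (2 * W1f y + 2 * Tf y + 2 * Vf y) + (2 * W1f y + 2 * Rf y + Tf y + Yf y))) y := by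
    intro y
    rw [hderiv2]
    have h := (((hasDerivAt_Pf y).add ((hasDerivAt_Tf y).const_mul 2)).add
      ((hasDerivAt_Rf y).const_mul 2)).add (hasDerivAt_Vf y)
    exact h.const_mul 6
  refine ⟨fun y => (hd1 y).differentiableAt, fun y => (hd2 y).differentiableAt,
    fun y => (hd3 y).differentiableAt, fun x => ?_⟩
  rw [(hd1 x).deriv, (hd2 x).deriv, (hd3 x).deriv,
    show S x = Pf x from congrFun S_eq_Pf x]
  have r1 := rel1 x
  have r2 := rel2 x
  have r3 := rel3 x
  linear_combination (30 * x + 6) * r1 + (15 * x) * r2 + (6 * x) * r3
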